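/- Let A and B be groups, let s₁,…,sₙ be a generating set of A and r₁,…,rₙ a generating set of B (n ≥ 1), with every sᵢ and every rᵢ nontrivial. Identify A and B with their images in the free product A ∗ B and set g := s₁r₁·s₂r₂ ⋯ sₙrₙ ∈ A ∗ B. If φ is an automorphism of A ∗ B satisfying φ(A) = A, φ(B) = B, φ(gAg⁻¹) = gAg⁻¹ and φ(gBg⁻¹) = gBg⁻¹ (all as subgroups), then φ is the identity automorphism. (Hence the common stabilizer in Aut(A ∗ B) of the four Bass–Serre tree vertices A, B, gA, gB is trivial.) -/

import Mathlib

universe u v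

namespace FourVertexAux

section Words

variable {ι : Type*} [DecidableEq ι] {M : ι → Type*} [∀ i, Group (M i)]
  [∀ i, DecidableEq (M i)]

theorem word_prod_injective :
    Function.Injective (Monoid.CoprodI.Word.prod : Monoid.CoprodI.Word M → Monoid.CoprodI M) :=
  fun w w' h => Monoid.CoprodI.Word.equiv.symm.injective (by exact h)

omit [DecidableEq ι] [∀ i, DecidableEq (M i)] in
theorem prod_mk (l : List (Σ i, M i)) (h1 h2) :
    Monoid.CoprodI.Word.prod (⟨l, h1, h2⟩ : Monoid.CoprodI.Word M)
      = (l.map fun p => Monoid.CoprodI.of p.2).prod := rfl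

/-- If `x` conjugates each `of`-range into the same-index `of`-range and every index has
a distinct index with a nontrivial group, then `x = 1`. -/
theorem conj_eq_one (x : Monoid.CoprodI M)
    (hnt : ∀ j : ι, ∃ i : ι, i ≠ j ∧ ∃ m : M i, m ≠ 1)
    (hconj : ∀ (i : ι) (m : M i), ∃ m' : M i,
      x * Monoid.CoprodI.of m * x⁻¹ = Monoid.CoprodI.of m') : x = 1 := by
  set w := Monoid.CoprodI.Word.equiv x with hw
  have hx : w.prod = x := Monoid.CoprodI.Word.equiv.symm_apply_apply x
  rcases eq_or_ne w.toList [] with hnil | hne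
  · rw [← hx, Monoid.CoprodI.Word.prod, hnil]; simp
  · exfalso
    set l := w.toList with hl
    set j := (l.getLast hne).1 with hj
    obtain ⟨i, hij, m, hm⟩ := hnt j
    obtain ⟨m', hm'⟩ := hconj i m
    set l2 : List (Σ i, M i) := l.reverse.map (fun p => ⟨p.1, p.2⁻¹⟩) with hl2
    have hlmem : ∀ p ∈ l, Sigma.snd p ≠ 1 := w.ne_one
    have hlchain : l.IsChain (fun p q : (Σ i, M i) => p.1 ≠ q.1) := w.chain_ne
    have hl2mem : ∀ p ∈ l2, p.2 ≠ 1 := by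
      intro p hp
      simp only [hl2, List.mem_map, List.mem_reverse] at hp
      obtain ⟨q, hq, rfl⟩ := hp
      simpa using hlmem q hq
    have hl2chain : l2.IsChain (fun p q : (Σ i, M i) => p.1 ≠ q.1) := by
      rw [hl2]
      apply (List.isChain_map _).2
      apply List.isChain_reverse.2
      exact hlchain.imp (by intro a b h; exact Ne.symm h)
    have hl2head : ∀ p ∈ l2.head?, p.1 = j := by
      intro p hp
      rw [hl2, List.head?_map, List.head?_reverse] at hp
      rw [List.getLast?_eq_getLast hne] at hp
      simp only [Option.map_some, Option.mem_def, Option.some.injEq] at hp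
      subst hp; rfl
    have hW1 : ∀ p ∈ l ++ (⟨i, m⟩ :: l2), Sigma.snd p ≠ 1 := by
      intro p hp
      rcases List.mem_append.1 hp with h | h
      · exact hlmem p h
      · rcases List.mem_cons.1 h with rfl | h
        · exact hm
        · exact hl2mem p h
    have hW2 : (l ++ (⟨i, m⟩ :: l2)).IsChain (fun p q : (Σ i, M i) => p.1 ≠ q.1) := by
      rw [List.isChain_append]
      refine ⟨hlchain, ?_, ?_⟩
      · rw [List.isChain_cons]
        refine ⟨?_, hl2chain⟩
        intro y hy
        have := hl2head y hy
        simpa [this] using hij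
      · intro p hp q hq
        rw [List.getLast?_eq_getLast hne] at hp
        simp only [Option.mem_def, Option.some.injEq] at hp
        simp only [List.head?_cons, Option.mem_def, Option.some.injEq] at hq
        subst hp; subst hq
        exact fun h => hij h.symm
    set W : Monoid.CoprodI.Word M := ⟨l ++ (⟨i, m⟩ :: l2), hW1, hW2⟩ with hWdef
    have hl2prod : (l2.map fun p => Monoid.CoprodI.of p.2).prod = x⁻¹ := by
      have hcomp : ((fun p => Monoid.CoprodI.of p.snd) ∘ fun p : Σ i, M i =>
          (⟨p.fst, p.snd⁻¹⟩ : Σ i, M i))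
          = (fun x => x⁻¹) ∘ (fun l : Σ i, M i => Monoid.CoprodI.of l.snd) := by
        funext p; simp
      rw [← hx, Monoid.CoprodI.Word.prod, ← hl, List.prod_inv_reverse, hl2, List.map_map,
        hcomp, List.map_reverse, List.map_map]
    have hlprod : (l.map fun p => Monoid.CoprodI.of p.2).prod = x := hx
    have hWprod : W.prod = Monoid.CoprodI.of m' := by
      rw [← hm', hWdef, prod_mk, List.map_append, List.prod_append, List.map_cons,
        List.prod_cons, hl2prod, hlprod, mul_assoc]
    have hm'ne : m' ≠ 1 := by
      rintro rfl
      rw [map_one] at hm'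
      have h0 : Monoid.CoprodI.of m = 1 := by
        have := congrArg (fun z => x⁻¹ * z * x) hm'
        simpa [mul_assoc] using this
      exact hm (Monoid.CoprodI.of_injective i (by rw [h0, map_one]))
    have hW' : ∀ p ∈ [(⟨i, m'⟩ : Σ i, M i)], Sigma.snd p ≠ 1 := by simpa using hm'ne
    have hW'2 : ([(⟨i, m'⟩ : Σ i, M i)]).IsChain (fun p q : (Σ i, M i) => p.1 ≠ q.1) := by simp
    have : W = ⟨[⟨i, m'⟩], hW', hW'2⟩ := word_prod_injective (by
      rw [hWprod, prod_mk]; simp)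
    have hlen := congrArg (fun w => w.toList.length) this
    simp only [hWdef, List.length_append, List.length_cons, List.length_map,
      List.length_reverse] at hlen
    have : l.length = 0 := by simp [hl2] at hlen; omega
    exact hne (List.eq_nil_of_length_eq_zero this)

def altList (t f : ι) : List (M t × M f) → List (Σ i, M i)
  | [] => []
  | q :: u => ⟨t, q.1⟩ :: ⟨f, q.2⟩ :: altList t f u

omit [DecidableEq ι] [∀ i, DecidableEq (M i)] in
theorem altList_ne_one (t f : ι) (u : List (M t × M f))
    (hu : ∀ q ∈ u, q.1 ≠ 1 ∧ q.2 ≠ 1) : ∀ p ∈ altList t f u, Sigma.snd p ≠ 1 := by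
  induction u with
  | nil => simp [altList]
  | cons q u ih =>
    intro p hp
    rcases List.mem_cons.1 hp with rfl | hp
    · exact (hu q (by simp)).1
    rcases List.mem_cons.1 hp with rfl | hp
    · exact (hu q (by simp)).2
    · exact ih (fun q hq => hu q (by simp [hq])) p hp

omit [DecidableEq ι] [∀ i, DecidableEq (M i)] in
theorem altList_chain (t f : ι) (htf : t ≠ f) (u : List (M t × M f)) :
    (altList t f u).IsChain (fun p q : (Σ i, M i) => p.1 ≠ q.1) ∧
      (∀ p ∈ (altList t f u).head?, Sigma.fst p = t) := by
  induction u with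
  | nil => simp [altList]
  | cons q u ih =>
    refine ⟨?_, by simp [altList]⟩
    rw [altList, List.isChain_cons_cons, List.isChain_cons]
    refine ⟨htf, ?_, ih.1⟩
    intro y hy
    have := ih.2 y hy
    simp only [this]
    exact Ne.symm htf

omit [DecidableEq ι] [∀ i, DecidableEq (M i)] in
theorem altList_prod (t f : ι) (u : List (M t × M f)) :
    ((altList t f u).map fun p => Monoid.CoprodI.of p.2).prod
      = (u.map fun q => Monoid.CoprodI.of q.1 * Monoid.CoprodI.of q.2).prod := by
  induction u with
  | nil => simp [altList]
  | cons q u ih => simp [altList, ih, mul_assoc]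

omit [DecidableEq ι] [∀ i, DecidableEq (M i)] in
theorem altList_injective (t f : ι) (u v : List (M t × M f))
    (h : altList t f u = altList t f v) : u = v := by
  induction u generalizing v with
  | nil => cases v with
    | nil => rfl
    | cons q v => simp [altList] at h
  | cons q u ih =>
    cases v with
    | nil => simp [altList] at h
    | cons q' v =>
      simp only [altList, List.cons.injEq] at h
      obtain ⟨h1, h2, h3⟩ := h
      have e1 : q.1 = q'.1 := eq_of_heq (Sigma.mk.inj_iff.1 h1).2
      have e2 : q.2 = q'.2 := eq_of_heq (Sigma.mk.inj_iff.1 h2).2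
      rw [ih v h3, Prod.ext e1 e2]

theorem alt_inj (t f : ι) (htf : t ≠ f) (u v : List (M t × M f))
    (hu : ∀ q ∈ u, q.1 ≠ 1 ∧ q.2 ≠ 1) (hv : ∀ q ∈ v, q.1 ≠ 1 ∧ q.2 ≠ 1)
    (h : (u.map fun q => Monoid.CoprodI.of q.1 * Monoid.CoprodI.of q.2).prod
      = (v.map fun q => Monoid.CoprodI.of q.1 * Monoid.CoprodI.of q.2).prod) : u = v := by
  have hW : (⟨altList t f u, altList_ne_one t f u hu, (altList_chain t f htf u).1⟩ :
      Monoid.CoprodI.Word M)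
      = ⟨altList t f v, altList_ne_one t f v hv, (altList_chain t f htf v).1⟩ := by
    apply word_prod_injective
    show ((altList t f u).map fun p => Monoid.CoprodI.of p.2).prod
      = ((altList t f v).map fun p => Monoid.CoprodI.of p.2).prod
    rw [altList_prod, altList_prod, h]
  exact altList_injective t f u v (congrArg Monoid.CoprodI.Word.toList hW)

end Words

section Bridge

/-- The `Bool`-indexed family for the binary free product, with `ULift`s to equalize
universes. -/
def GB (A : Type u) (B : Type v) : Bool → Type (max u v) :=
  fun b => cond b (ULift.{v} A) (ULift.{u} B)

instance instGBGroup (A : Type u) (B : Type v) [Group A] [Group B] :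
    ∀ b, Group (GB A B b)
  | true => inferInstanceAs (Group (ULift A))
  | false => inferInstanceAs (Group (ULift B))

variable (A : Type u) (B : Type v) [Group A] [Group B]

/-- Forward homomorphism. -/
def eFwd : Monoid.Coprod A B →* Monoid.CoprodI (GB A B) :=
  Monoid.Coprod.lift
    ((Monoid.CoprodI.of (M := GB A B) (i := true)).comp
      ((MulEquiv.ulift (α := A)).symm.toMonoidHom))
    ((Monoid.CoprodI.of (M := GB A B) (i := false)).comp
      ((MulEquiv.ulift (α := B)).symm.toMonoidHom))

/-- Backward homomorphism. -/
def eBwd : Monoid.CoprodI (GB A B) →* Monoid.Coprod A B :=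
  Monoid.CoprodI.lift fun b => match b with
    | true => (Monoid.Coprod.inl (M := A) (N := B)).comp (MulEquiv.ulift.toMonoidHom)
    | false => (Monoid.Coprod.inr (M := A) (N := B)).comp (MulEquiv.ulift.toMonoidHom)

/-- The isomorphism `A ∗ B ≃* CoprodI (GB A B)`. -/
def EIso : Monoid.Coprod A B ≃* Monoid.CoprodI (GB A B) :=
  MonoidHom.toMulEquiv (eFwd A B) (eBwd A B)
    (by
      apply Monoid.Coprod.hom_ext
      · ext x
        simp only [MonoidHom.comp_apply, MonoidHom.id_apply, eFwd, eBwd,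
          Monoid.Coprod.lift_apply_inl, Monoid.CoprodI.lift_of]
        rfl
      · ext x
        simp only [MonoidHom.comp_apply, MonoidHom.id_apply, eFwd, eBwd,
          Monoid.Coprod.lift_apply_inr, Monoid.CoprodI.lift_of]
        rfl)
    (by
      apply Monoid.CoprodI.ext_hom
      intro i
      cases i <;> ext x <;> simp [eFwd, eBwd]
      · rfl
      · rfl)

theorem EIso_inl (a : A) :
    EIso A B (Monoid.Coprod.inl a) = Monoid.CoprodI.of (M := GB A B) (i := true) ⟨a⟩ := rfl

theorem EIso_inr (b : B) :
    EIso A B (Monoid.Coprod.inr b) = Monoid.CoprodI.of (M := GB A B) (i := false) ⟨b⟩ := rfl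

end Bridge

section Transport

theorem map_equiv_eq {G H : Type*} [Group G] [Group H] (E : G ≃* H) (φ : G ≃* G)
    (K : Subgroup G) (hK : Subgroup.map φ.toMonoidHom K = K) :
    Subgroup.map ((E.symm.trans (φ.trans E)).toMonoidHom) (Subgroup.map E.toMonoidHom K)
      = Subgroup.map E.toMonoidHom K := by
  ext y
  simp only [Subgroup.mem_map]
  constructor
  · rintro ⟨-, ⟨k, hk, rfl⟩, rfl⟩
    refine ⟨φ k, ?_, by simp⟩
    rw [← hK]
    exact ⟨k, hk, rfl⟩
  · rintro ⟨k, hk, rfl⟩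
    have hk' : k ∈ Subgroup.map φ.toMonoidHom K := hK.symm ▸ hk
    obtain ⟨k₀, hk₀, rfl⟩ := hk'
    exact ⟨E k₀, ⟨k₀, hk₀, rfl⟩, by simp⟩

theorem map_conj_comm {G H : Type*} [Group G] [Group H] (E : G ≃* H) (g : G) (K : Subgroup G) :
    Subgroup.map E.toMonoidHom (Subgroup.map (MulAut.conj g).toMonoidHom K)
      = Subgroup.map (MulAut.conj (E g)).toMonoidHom (Subgroup.map E.toMonoidHom K) := by
  rw [Subgroup.map_map, Subgroup.map_map]
  congr 1
  ext x
  simp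

end Transport

end FourVertexAux
open FourVertexAux
/-- An automorphism of `A ∗ B` stabilizing the four subgroups `A`, `B`, `gAg⁻¹`, `gBg⁻¹`
setwise, where `g = s₁r₁⋯sₙrₙ` is an alternating product of nontrivial generators, is the
identity. -/
theorem aut_stabilizing_four_vertices_is_id {A B : Type*} [Group A] [Group B]
    (n : ℕ) (hn : 1 ≤ n) (s : Fin n → A) (r : Fin n → B)
    (hs1 : ∀ i, s i ≠ 1) (hr1 : ∀ i, r i ≠ 1)
    (hsgen : Subgroup.closure (Set.range s) = (⊤ : Subgroup A))
    (hrgen : Subgroup.closure (Set.range r) = (⊤ : Subgroup B))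
    (g : Monoid.Coprod A B)
    (hg : g = (List.ofFn fun i => Monoid.Coprod.inl (s i) * Monoid.Coprod.inr (r i)).prod)
    (φ : MulAut (Monoid.Coprod A B))
    (hA : Subgroup.map φ.toMonoidHom (Monoid.Coprod.inl : A →* Monoid.Coprod A B).range =
      (Monoid.Coprod.inl : A →* Monoid.Coprod A B).range)
    (hB : Subgroup.map φ.toMonoidHom (Monoid.Coprod.inr : B →* Monoid.Coprod A B).range =
      (Monoid.Coprod.inr : B →* Monoid.Coprod A B).range)
    (hgA : Subgroup.map φ.toMonoidHom
        (Subgroup.map (MulAut.conj g).toMonoidHom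
          (Monoid.Coprod.inl : A →* Monoid.Coprod A B).range) =
      Subgroup.map (MulAut.conj g).toMonoidHom
        (Monoid.Coprod.inl : A →* Monoid.Coprod A B).range)
    (hgB : Subgroup.map φ.toMonoidHom
        (Subgroup.map (MulAut.conj g).toMonoidHom
          (Monoid.Coprod.inr : B →* Monoid.Coprod A B).range) =
      Subgroup.map (MulAut.conj g).toMonoidHom
        (Monoid.Coprod.inr : B →* Monoid.Coprod A B).range) :
    φ = MulEquiv.refl (Monoid.Coprod A B) := by
  classical
  letI : ∀ i, DecidableEq (GB A B i) := fun i => Classical.decEq _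
  set E : Monoid.Coprod A B ≃* Monoid.CoprodI (GB A B) := EIso A B with hE
  set ψ : Monoid.CoprodI (GB A B) ≃* Monoid.CoprodI (GB A B) :=
    E.symm.trans (φ.trans E) with hψdef
  have hψE : ∀ x, ψ (E x) = E (φ x) := fun x => by simp [hψdef]
  -- the two summand subgroup families
  set Ci : Bool → Subgroup (Monoid.Coprod A B) := fun i =>
    cond i (Monoid.Coprod.inl : A →* _).range (Monoid.Coprod.inr : B →* _).range with hCi
  set R : Bool → Subgroup (Monoid.CoprodI (GB A B)) := fun i =>
    (Monoid.CoprodI.of (M := GB A B) (i := i)).range with hRdef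
  have hmapR : ∀ i, Subgroup.map E.toMonoidHom (Ci i) = R i := by
    intro i
    cases i
    · ext x
      simp only [hCi, hRdef, Subgroup.mem_map, MonoidHom.mem_range, cond_false]
      constructor
      · rintro ⟨-, ⟨b, rfl⟩, rfl⟩
        exact ⟨⟨b⟩, (EIso_inr A B b).symm⟩
      · rintro ⟨b, rfl⟩
        exact ⟨Monoid.Coprod.inr b.down, ⟨b.down, rfl⟩, (EIso_inr A B b.down)⟩
    · ext x
      simp only [hCi, hRdef, Subgroup.mem_map, MonoidHom.mem_range, cond_true]
      constructor
      · rintro ⟨-, ⟨a, rfl⟩, rfl⟩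
        exact ⟨⟨a⟩, (EIso_inl A B a).symm⟩
      · rintro ⟨a, rfl⟩
        exact ⟨Monoid.Coprod.inl a.down, ⟨a.down, rfl⟩, (EIso_inl A B a.down)⟩
  have hφC : ∀ i, Subgroup.map φ.toMonoidHom (Ci i) = Ci i := by
    intro i; cases i
    · exact hB
    · exact hA
  have hφgC : ∀ i, Subgroup.map φ.toMonoidHom
      (Subgroup.map (MulAut.conj g).toMonoidHom (Ci i))
      = Subgroup.map (MulAut.conj g).toMonoidHom (Ci i) := by
    intro i; cases i
    · exact hgB
    · exact hgA
  set g' : Monoid.CoprodI (GB A B) := E g with hg'def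
  have hψR : ∀ i, Subgroup.map ψ.toMonoidHom (R i) = R i := by
    intro i
    rw [← hmapR i]
    exact map_equiv_eq E φ (Ci i) (hφC i)
  have hstep : ∀ i, Subgroup.map E.toMonoidHom
      (Subgroup.map (MulAut.conj g).toMonoidHom (Ci i))
      = Subgroup.map (MulAut.conj g').toMonoidHom (R i) := by
    intro i
    rw [map_conj_comm, hmapR i]
  have hψgR : ∀ i, Subgroup.map ψ.toMonoidHom
      (Subgroup.map (MulAut.conj g').toMonoidHom (R i))
      = Subgroup.map (MulAut.conj g').toMonoidHom (R i) := by
    intro i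
    rw [← hstep i]
    exact map_equiv_eq E φ _ (hφgC i)
  -- the element h = g'⁻¹ * ψ g' normalizes each summand
  have hconj : ∀ (i : Bool) (m : GB A B i), ∃ m' : GB A B i,
      (g'⁻¹ * ψ g') * Monoid.CoprodI.of m * (g'⁻¹ * ψ g')⁻¹ = Monoid.CoprodI.of m' := by
    intro i m
    have h1 : Monoid.CoprodI.of m ∈ Subgroup.map ψ.toMonoidHom (R i) := by
      rw [hψR i]; exact ⟨m, rfl⟩
    obtain ⟨x, hx, hxe⟩ := h1
    obtain ⟨m₀, rfl⟩ := hx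
    have h2 : ψ (g' * Monoid.CoprodI.of m₀ * g'⁻¹)
        ∈ Subgroup.map (MulAut.conj g').toMonoidHom (R i) := by
      rw [← hψgR i]
      refine Subgroup.mem_map_of_mem _ ?_
      refine ⟨Monoid.CoprodI.of m₀, ⟨m₀, rfl⟩, ?_⟩
      simp [MulAut.conj_apply]
    obtain ⟨y, hy, hye⟩ := h2
    obtain ⟨m', rfl⟩ := hy
    refine ⟨m', ?_⟩
    have hye' : g' * Monoid.CoprodI.of m' * g'⁻¹
        = ψ g' * Monoid.CoprodI.of m * (ψ g')⁻¹ := by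
      rw [show (MulAut.conj g').toMonoidHom (Monoid.CoprodI.of m')
          = g' * Monoid.CoprodI.of m' * g'⁻¹ from rfl] at hye
      have hxe' : ψ (Monoid.CoprodI.of m₀) = Monoid.CoprodI.of m := hxe
      rw [hye]
      simp [hxe']
    have h3 : g'⁻¹ * (ψ g' * Monoid.CoprodI.of m * (ψ g')⁻¹) * g'
        = Monoid.CoprodI.of m' := by
      rw [← hye']; group
    rw [← h3]; group
  have hnt : ∀ j : Bool, ∃ i : Bool, i ≠ j ∧ ∃ m : GB A B i, m ≠ 1 := by
    intro j
    cases j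
    · refine ⟨true, by simp, ⟨s ⟨0, hn⟩⟩, ?_⟩
      intro hc
      exact hs1 ⟨0, hn⟩ (congrArg ULift.down hc)
    · refine ⟨false, by simp, ⟨r ⟨0, hn⟩⟩, ?_⟩
      intro hc
      exact hr1 ⟨0, hn⟩ (congrArg ULift.down hc)
  have hone : g'⁻¹ * ψ g' = 1 := @conj_eq_one Bool instDecidableEqBool (GB A B) _ (fun i => Classical.decEq _) (g'⁻¹ * ψ g') hnt hconj
  have hψg : ψ g' = g' := by
    have := congrArg (fun z => g' * z) hone
    simpa [mul_assoc] using this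
  -- normal form of g'
  have hg' : g' = (List.ofFn fun i => Monoid.CoprodI.of (M := GB A B) (i := true) ⟨s i⟩
      * Monoid.CoprodI.of (M := GB A B) (i := false) ⟨r i⟩).prod := by
    rw [hg'def, hg, map_list_prod, List.map_ofFn]
    refine congrArg List.prod (congrArg List.ofFn (funext fun i => ?_))
    simp only [Function.comp_apply, map_mul]
    rfl
  -- the images of the generators under ψ
  have hps : ∀ i : Fin n, ∃ a : GB A B true,
      ψ (Monoid.CoprodI.of (M := GB A B) (i := true) ⟨s i⟩) = Monoid.CoprodI.of a := by
    intro i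
    have : ψ (Monoid.CoprodI.of (M := GB A B) (i := true) ⟨s i⟩) ∈ R true := by
      rw [← hψR true]
      exact Subgroup.mem_map_of_mem _ ⟨⟨s i⟩, rfl⟩
    obtain ⟨a, ha⟩ := this
    exact ⟨a, ha.symm⟩
  have hpr : ∀ i : Fin n, ∃ b : GB A B false,
      ψ (Monoid.CoprodI.of (M := GB A B) (i := false) ⟨r i⟩) = Monoid.CoprodI.of b := by
    intro i
    have : ψ (Monoid.CoprodI.of (M := GB A B) (i := false) ⟨r i⟩) ∈ R false := by
      rw [← hψR false]
      exact Subgroup.mem_map_of_mem _ ⟨⟨r i⟩, rfl⟩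
    obtain ⟨b, hb⟩ := this
    exact ⟨b, hb.symm⟩
  choose a' ha' using hps
  choose b' hb' using hpr
  have ha'ne : ∀ i, a' i ≠ 1 := by
    intro i hc
    apply hs1 i
    have h4 : ψ (Monoid.CoprodI.of (M := GB A B) (i := true) ⟨s i⟩) = 1 := by
      rw [ha' i, hc, map_one]
    have h5 : Monoid.CoprodI.of (M := GB A B) (i := true) ⟨s i⟩ = 1 :=
      ψ.injective (by rw [h4, map_one])
    have h6 : (⟨s i⟩ : GB A B true) = 1 := by
      apply Monoid.CoprodI.of_injective (M := GB A B) true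
      rw [h5]
      exact (map_one _).symm
    exact congrArg ULift.down h6
  have hb'ne : ∀ i, b' i ≠ 1 := by
    intro i hc
    apply hr1 i
    have h4 : ψ (Monoid.CoprodI.of (M := GB A B) (i := false) ⟨r i⟩) = 1 := by
      rw [hb' i, hc, map_one]
    have h5 : Monoid.CoprodI.of (M := GB A B) (i := false) ⟨r i⟩ = 1 :=
      ψ.injective (by rw [h4, map_one])
    have h6 : (⟨r i⟩ : GB A B false) = 1 := by
      apply Monoid.CoprodI.of_injective (M := GB A B) false
      rw [h5]
      exact (map_one _).symm
    exact congrArg ULift.down h6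
  -- compare the two normal forms
  have hulist : ((List.ofFn fun i => ((a' i : GB A B true), (b' i : GB A B false))).map
      (fun q => Monoid.CoprodI.of (M := GB A B) (i := true) q.1
      * Monoid.CoprodI.of (M := GB A B) (i := false) q.2)).prod = ψ g' := by
    rw [List.map_ofFn, hg', map_list_prod, List.map_ofFn]
    refine congrArg List.prod (congrArg List.ofFn (funext fun i => ?_))
    simp only [Function.comp_apply, map_mul]
    rw [ha' i, hb' i]
  have huv : (List.ofFn fun i => ((a' i : GB A B true), (b' i : GB A B false)))
      = List.ofFn fun i => ((⟨s i⟩ : GB A B true), (⟨r i⟩ : GB A B false)) := by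
    refine @alt_inj Bool instDecidableEqBool (GB A B) _ (fun i => Classical.decEq _)
      true false (by simp) _ _ ?_ ?_ ?_
    · intro q hq
      rw [List.mem_ofFn] at hq
      obtain ⟨i, rfl⟩ := hq
      exact ⟨ha'ne i, hb'ne i⟩
    · intro q hq
      obtain ⟨i, rfl⟩ := List.mem_ofFn.1 hq
      constructor
      · intro hc; exact hs1 i (congrArg ULift.down hc)
      · intro hc; exact hr1 i (congrArg ULift.down hc)
    · rw [hulist, hψg, hg']
      exact (congrArg List.prod (congrArg List.ofFn (funext fun i => rfl))).trans
        (congrArg List.prod (List.map_ofFn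
          (f := fun i => ((⟨s i⟩ : GB A B true), (⟨r i⟩ : GB A B false)))
          (g := fun q => Monoid.CoprodI.of (M := GB A B) (i := true) q.1
            * Monoid.CoprodI.of (M := GB A B) (i := false) q.2))).symm
  have hfun := List.ofFn_inj.1 huv
  have hfix_s : ∀ i : Fin n, φ (Monoid.Coprod.inl (s i)) = Monoid.Coprod.inl (s i) := by
    intro i
    have h7 : (a' i, b' i) = ((⟨s i⟩ : GB A B true), (⟨r i⟩ : GB A B false)) :=
      congrFun hfun i
    have h8 : a' i = ⟨s i⟩ := congrArg Prod.fst h7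
    apply E.injective
    rw [← hψE (Monoid.Coprod.inl (s i))]
    show ψ (Monoid.CoprodI.of (M := GB A B) (i := true) ⟨s i⟩)
      = Monoid.CoprodI.of (M := GB A B) (i := true) ⟨s i⟩
    rw [ha' i, h8]
  have hfix_r : ∀ i : Fin n, φ (Monoid.Coprod.inr (r i)) = Monoid.Coprod.inr (r i) := by
    intro i
    have h7 : (a' i, b' i) = ((⟨s i⟩ : GB A B true), (⟨r i⟩ : GB A B false)) :=
      congrFun hfun i
    have h8 : b' i = ⟨r i⟩ := congrArg Prod.snd h7
    apply E.injective
    rw [← hψE (Monoid.Coprod.inr (r i))]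
    show ψ (Monoid.CoprodI.of (M := GB A B) (i := false) ⟨r i⟩)
      = Monoid.CoprodI.of (M := GB A B) (i := false) ⟨r i⟩
    rw [hb' i, h8]
  -- closure arguments
  have hfixA : ∀ a : A, φ (Monoid.Coprod.inl a) = Monoid.Coprod.inl a := by
    intro a
    have hsub : Subgroup.closure (Set.range s) ≤ Subgroup.comap
        (Monoid.Coprod.inl : A →* Monoid.Coprod A B)
        (MonoidHom.eqLocus φ.toMonoidHom (MonoidHom.id _)) := by
      rw [Subgroup.closure_le]
      rintro x ⟨i, rfl⟩
      exact hfix_s i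
    exact hsub (by rw [hsgen]; trivial)
  have hfixB : ∀ b : B, φ (Monoid.Coprod.inr b) = Monoid.Coprod.inr b := by
    intro b
    have hsub : Subgroup.closure (Set.range r) ≤ Subgroup.comap
        (Monoid.Coprod.inr : B →* Monoid.Coprod A B)
        (MonoidHom.eqLocus φ.toMonoidHom (MonoidHom.id _)) := by
      rw [Subgroup.closure_le]
      rintro x ⟨i, rfl⟩
      exact hfix_r i
    exact hsub (by rw [hrgen]; trivial)
  have htot : ∀ x : Monoid.Coprod A B, φ x = x := by
    intro x
    have hx : x ∈ (⊤ : Subgroup (Monoid.Coprod A B)) := trivial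
    rw [← Monoid.Coprod.range_inl_sup_range_inr] at hx
    have hle : (Monoid.Coprod.inl : A →* Monoid.Coprod A B).range
        ⊔ (Monoid.Coprod.inr : B →* Monoid.Coprod A B).range
        ≤ MonoidHom.eqLocus φ.toMonoidHom (MonoidHom.id _) := by
      apply sup_le
      · rintro y ⟨a, rfl⟩
        exact hfixA a
      · rintro y ⟨b, rfl⟩
        exact hfixB b
    exact hle hx
  exact MulEquiv.ext htot
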